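/- For every integer n ≥ 6, the positive co-degree Turán number of F₅ satisfies co⁺ex(n, F₅) = ⌊n/3⌋. -/

import Mathlib

open Finset

/-- The co-degree of a vertex set `S` in the hypergraph with edge set `E`:
the number of edges containing `S`. -/
def coDeg {n : ℕ} (E : Finset (Finset (Fin n))) (S : Finset (Fin n)) : ℕ :=
  (E.filter (fun e => S ⊆ e)).card

/-- The minimum positive co-degree `δ⁺_{r-1}` of an `r`-graph on `Fin n` with edge set `E`:
the largest `k` such that every `(r-1)`-set of vertices contained in at least one edge is
contained in at least `k` edges (i.e. the minimum of the positive co-degrees). -/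
noncomputable def minPosCoDeg (r n : ℕ) (E : Finset (Finset (Fin n))) : ℕ :=
  sInf {d : ℕ | ∃ S : Finset (Fin n), S.card = r - 1 ∧ coDeg E S = d ∧ 0 < d}

/-- `E` contains a copy of `F`: an injection of the vertices of `F` mapping
edges of `F` to edges of `E`. -/
def Contains {α β : Type*} [DecidableEq α] [DecidableEq β]
    (F : Finset (Finset α)) (E : Finset (Finset β)) : Prop :=
  ∃ f : α → β, Function.Injective f ∧ ∀ e ∈ F, e.image f ∈ E

/-- The positive co-degree Turán number `co⁺ex_r(n, F)`: the maximum of the minimum positive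
co-degree over all `F`-free `r`-graphs on `n` vertices with at least one edge. -/
noncomputable def coPlusEx {α : Type*} [DecidableEq α] (r n : ℕ) (F : Finset (Finset α)) : ℕ :=
  sSup {d : ℕ | ∃ E : Finset (Finset (Fin n)),
    (∀ e ∈ E, e.card = r) ∧ E.Nonempty ∧ ¬ Contains F E ∧ minPosCoDeg r n E = d}


def K4minus : Finset (Finset (Fin 4)) := {{0,1,2}, {0,1,3}, {0,2,3}}

def K4 : Finset (Finset (Fin 4)) := {{0,1,2}, {0,1,3}, {0,2,3}, {1,2,3}}

def F5 : Finset (Finset (Fin 5)) := {{0,1,2}, {0,1,3}, {2,3,4}}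

def F32 : Finset (Finset (Fin 5)) := {{0,1,2}, {0,3,4}, {1,3,4}, {2,3,4}}

def Fano : Finset (Finset (Fin 7)) :=
  {{0,1,2}, {2,3,4}, {0,4,5}, {1,3,5}, {0,3,6}, {1,4,6}, {2,5,6}}

def F33 : Finset (Finset (Fin 6)) :=
  {{0,1,2}, {0,3,4}, {0,3,5}, {0,4,5}, {1,3,4}, {1,3,5}, {1,4,5}, {2,3,4}, {2,3,5}, {2,4,5}}

def C5 : Finset (Finset (Fin 5)) := {{0,1,2}, {1,2,3}, {2,3,4}, {0,3,4}, {0,1,4}}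

def C5minus : Finset (Finset (Fin 5)) := {{0,1,2}, {1,2,3}, {2,3,4}, {0,3,4}}

def K222 : Finset (Finset (Fin 6)) :=
  {{0,2,4}, {0,2,5}, {0,3,4}, {0,3,5}, {1,2,4}, {1,2,5}, {1,3,4}, {1,3,5}}

/-- `J k`: the 3-graph on `k+1` vertices whose edges are all triples containing the
distinguished vertex `0`. -/
def Jgraph (k : ℕ) : Finset (Finset (Fin (k+1))) :=
  (Finset.univ.powersetCard 3).filter (fun e => (0 : Fin (k+1)) ∈ e)

/-- `E` is (isomorphic to) the complete balanced `k`-partite 3-graph on `n` vertices: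
there is a partition of the vertices into `k` classes whose sizes differ by at most one,
such that the edges are exactly the triples of vertices in three pairwise distinct classes. -/
def IsCompleteBalancedMultipartite (n k : ℕ) (E : Finset (Finset (Fin n))) : Prop :=
  ∃ f : Fin n → Fin k,
    (∀ i j : Fin k, (Finset.univ.filter (fun v => f v = i)).card ≤
      (Finset.univ.filter (fun v => f v = j)).card + 1) ∧
    ∀ e : Finset (Fin n), e ∈ E ↔ (e.card = 3 ∧ (e.image f).card = 3)

/-- The unique (6,3,2)-design `H₆`. -/
def H6 : Finset (Finset (Fin 6)) :=
  {{0,1,2}, {0,1,3}, {2,3,4}, {2,3,5}, {0,4,5}, {1,4,5}, {0,2,4}, {0,3,5}, {1,2,5}, {1,3,4}}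

/-- `E` is (isomorphic to) a balanced blow-up of `H₆` on `n` vertices: the vertices are
partitioned into six classes of equal size, and the edges are exactly the triples whose
three vertices lie in classes forming an edge of `H₆`. -/
def IsBalancedH6Blowup (n : ℕ) (E : Finset (Finset (Fin n))) : Prop :=
  ∃ f : Fin n → Fin 6,
    (∀ i j : Fin 6, (Finset.univ.filter (fun v => f v = i)).card =
      (Finset.univ.filter (fun v => f v = j)).card) ∧
    ∀ e : Finset (Fin n), e ∈ E ↔ (e.card = 3 ∧ e.image f ∈ H6)


section F5Aux

open Finset

variable {n : ℕ}

/-- The link of the pair `{a,b}`: vertices `v` (other than `a,b`) with `{a,b,v} ∈ E`. -/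
def Nbhd (E : Finset (Finset (Fin n))) (a b : Fin n) : Finset (Fin n) :=
  univ.filter (fun v => v ≠ a ∧ v ≠ b ∧ ({a, b, v} : Finset (Fin n)) ∈ E)

lemma mem_Nbhd {E : Finset (Finset (Fin n))} {a b v : Fin n} :
    v ∈ Nbhd E a b ↔ v ≠ a ∧ v ≠ b ∧ ({a, b, v} : Finset (Fin n)) ∈ E := by
  simp [Nbhd]

lemma coDeg_pair (E : Finset (Finset (Fin n))) (h3 : ∀ e ∈ E, e.card = 3)
    {a b : Fin n} (hab : a ≠ b) :
    coDeg E {a, b} = (Nbhd E a b).card := by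
  unfold coDeg
  symm
  apply Finset.card_bij (fun v _ => ({a, b, v} : Finset (Fin n)))
  · intro v hv
    rw [mem_Nbhd] at hv
    simp only [mem_filter]
    refine ⟨hv.2.2, ?_⟩
    intro t ht; simp at ht ⊢; tauto
  · intro v hv v' hv' h
    rw [mem_Nbhd] at hv hv'
    have hm : v ∈ ({a, b, v'} : Finset (Fin n)) := by
      rw [← h]; simp
    simp at hm
    rcases hm with h' | h' | h'
    · exact absurd h' hv.1
    · exact absurd h' hv.2.1
    · exact h'
  · intro e hee
    simp only [mem_filter] at hee
    obtain ⟨heE, hsub⟩ := hee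
    have hcard : e.card = 3 := h3 e heE
    have hab2 : ({a, b} : Finset (Fin n)).card = 2 := by
      rw [card_insert_of_notMem (by simp [hab]), card_singleton]
    have h1 : (e \ ({a, b} : Finset (Fin n))).card = 1 := by
      rw [card_sdiff_of_subset hsub, hcard, hab2]
    obtain ⟨v, hv⟩ := Finset.card_eq_one.mp h1
    have hvmem : v ∈ e \ ({a, b} : Finset (Fin n)) := by rw [hv]; simp
    rw [Finset.mem_sdiff] at hvmem
    have hva : v ≠ a := by intro h'; exact hvmem.2 (by simp [h'])
    have hvb : v ≠ b := by intro h'; exact hvmem.2 (by simp [h'])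
    have hsub2 : ({a, b, v} : Finset (Fin n)) ⊆ e := by
      intro t ht; simp at ht
      rcases ht with rfl | rfl | rfl
      · exact hsub (by simp)
      · exact hsub (by simp)
      · exact hvmem.1
    have hc3 : ({a, b, v} : Finset (Fin n)).card = 3 := by
      rw [card_insert_of_notMem (by simp [hab, hva.symm]),
        card_insert_of_notMem (by simp [hvb.symm]), card_singleton]
    have heq : ({a, b, v} : Finset (Fin n)) = e :=
      Finset.eq_of_subset_of_card_le hsub2 (by rw [hcard, hc3])
    refine ⟨v, ?_, heq⟩
    rw [mem_Nbhd]
    exact ⟨hva, hvb, by rw [heq]; exact heE⟩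

lemma contains_F5_of {E : Finset (Finset (Fin n))} {a b c v w : Fin n}
    (hba : b ≠ a) (hbc : b ≠ c) (hbv : b ≠ v) (hbw : b ≠ w)
    (hac : a ≠ c) (hav : a ≠ v) (haw : a ≠ w)
    (hcv : c ≠ v) (hcw : c ≠ w) (hvw : v ≠ w)
    (h1 : ({a, b, v} : Finset (Fin n)) ∈ E)
    (h2 : ({c, b, v} : Finset (Fin n)) ∈ E)
    (h3 : ({a, c, w} : Finset (Fin n)) ∈ E) :
    Contains F5 E := by
  refine ⟨![b, v, a, c, w], ?_, ?_⟩
  · intro i j hij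
    fin_cases i <;> fin_cases j <;> simp_all
  · intro e he
    simp only [F5, mem_insert, mem_singleton] at he
    rcases he with rfl | rfl | rfl
    · have himg : ({0,1,2} : Finset (Fin 5)).image ![b,v,a,c,w] = {b, v, a} := by
        simp [Finset.image_insert]
      rw [himg]
      have : ({b, v, a} : Finset (Fin n)) = {a, b, v} := by ext t; simp; tauto
      rw [this]; exact h1
    · have himg : ({0,1,3} : Finset (Fin 5)).image ![b,v,a,c,w] = {b, v, c} := by
        simp [Finset.image_insert]
      rw [himg]
      have : ({b, v, c} : Finset (Fin n)) = {c, b, v} := by ext t; simp; tauto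
      rw [this]; exact h2
    · have himg : ({2,3,4} : Finset (Fin 5)).image ![b,v,a,c,w] = {a, c, w} := by
        simp [Finset.image_insert]
      rw [himg]; exact h3

/-- Upper bound: an F₅-free 3-graph has minimum positive co-degree at most n/3. -/
lemma upper_bound (hn : 6 ≤ n) (E : Finset (Finset (Fin n)))
    (h3 : ∀ e ∈ E, e.card = 3) (hne : E.Nonempty) (hF : ¬ Contains F5 E) :
    minPosCoDeg 3 n E ≤ n / 3 := by
  by_contra hcon
  push_neg at hcon
  -- every pair with nonempty link has link of size > n/3
  have key : ∀ a b : Fin n, a ≠ b → (Nbhd E a b).Nonempty →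
      n / 3 + 1 ≤ (Nbhd E a b).card := by
    intro a b hab hne'
    have hpos : 0 < coDeg E {a, b} := by
      rw [coDeg_pair E h3 hab]; exact Finset.card_pos.mpr hne'
    have hmem : coDeg E {a, b} ∈
        {d : ℕ | ∃ S : Finset (Fin n), S.card = 3 - 1 ∧ coDeg E S = d ∧ 0 < d} := by
      refine ⟨{a, b}, ?_, rfl, hpos⟩
      rw [card_insert_of_notMem (by simp [hab]), card_singleton]
    have := Nat.sInf_le hmem
    rw [← coDeg_pair E h3 hab]
    have h2 : minPosCoDeg 3 n E ≤ coDeg E {a, b} := this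
    omega
  obtain ⟨e, he⟩ := hne
  obtain ⟨x, y, z, hxy, hxz, hyz, rfl⟩ := Finset.card_eq_three.mp (h3 e he)
  -- the three links at the edge {x,y,z}
  have hzxy : z ∈ Nbhd E x y := mem_Nbhd.mpr ⟨hxz.symm, hyz.symm, he⟩
  have hxyz : x ∈ Nbhd E y z := by
    rw [mem_Nbhd]
    refine ⟨hxy, hxz, ?_⟩
    have : ({y, z, x} : Finset (Fin n)) = {x, y, z} := by ext t; simp; tauto
    rw [this]; exact he
  have hyxz : y ∈ Nbhd E x z := by
    rw [mem_Nbhd]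
    refine ⟨hxy.symm, hyz, ?_⟩
    have : ({x, z, y} : Finset (Fin n)) = {x, y, z} := by ext t; simp; tauto
    rw [this]; exact he
  have c1 : n / 3 + 1 ≤ (Nbhd E x y).card := key x y hxy ⟨z, hzxy⟩
  have c2 : n / 3 + 1 ≤ (Nbhd E y z).card := key y z hyz ⟨x, hxyz⟩
  have c3 : n / 3 + 1 ≤ (Nbhd E x z).card := key x z hxz ⟨y, hyxz⟩
  -- pigeonhole: two of the links intersect
  have hpig : (Nbhd E x y ∩ Nbhd E y z).Nonempty ∨
      (Nbhd E x y ∩ Nbhd E x z).Nonempty ∨ (Nbhd E y z ∩ Nbhd E x z).Nonempty := by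
    by_contra hd
    push_neg at hd
    obtain ⟨d1, d2, d3⟩ := hd
    have dAB : Disjoint (Nbhd E x y) (Nbhd E y z) :=
      Finset.disjoint_iff_inter_eq_empty.mpr d1
    have dAC : Disjoint (Nbhd E x y) (Nbhd E x z) :=
      Finset.disjoint_iff_inter_eq_empty.mpr d2
    have dBC : Disjoint (Nbhd E y z) (Nbhd E x z) :=
      Finset.disjoint_iff_inter_eq_empty.mpr d3
    have hA : Disjoint (Nbhd E x y) (Nbhd E y z ∪ Nbhd E x z) :=
      Finset.disjoint_union_right.mpr ⟨dAB, dAC⟩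
    have hcardU : (Nbhd E x y ∪ (Nbhd E y z ∪ Nbhd E x z)).card =
        (Nbhd E x y).card + ((Nbhd E y z).card + (Nbhd E x z).card) := by
      rw [Finset.card_union_of_disjoint hA, Finset.card_union_of_disjoint dBC]
    have hle : (Nbhd E x y ∪ (Nbhd E y z ∪ Nbhd E x z)).card ≤ n := by
      calc (Nbhd E x y ∪ (Nbhd E y z ∪ Nbhd E x z)).card
          ≤ (univ : Finset (Fin n)).card := Finset.card_le_card (Finset.subset_univ _)
        _ = n := by simp
    omega
  -- helper to extract a fifth vertex
  have pick : ∀ (p q : Fin n) (s t : Fin n), n / 3 + 1 ≤ (Nbhd E p q).card →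
      ∃ w ∈ Nbhd E p q, w ≠ s ∧ w ≠ t := by
    intro p q s t hcard
    have hst : ({s, t} : Finset (Fin n)).card ≤ 2 :=
      le_trans (Finset.card_insert_le _ _) (by simp)
    have hsd : 0 < (Nbhd E p q \ ({s, t} : Finset (Fin n))).card := by
      have := Finset.le_card_sdiff ({s, t} : Finset (Fin n)) (Nbhd E p q)
      omega
    obtain ⟨w, hw⟩ := Finset.card_pos.mp hsd
    rw [Finset.mem_sdiff] at hw
    refine ⟨w, hw.1, ?_, ?_⟩
    · intro h'; exact hw.2 (by simp [h'])
    · intro h'; exact hw.2 (by simp [h'])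
  rcases hpig with ⟨v, hv⟩ | ⟨v, hv⟩ | ⟨v, hv⟩
  · -- v ∈ N(x,y) ∩ N(y,z): shared y, apexes x, z; need w ∈ N(x,z) \ {y, v}
    rw [Finset.mem_inter, mem_Nbhd, mem_Nbhd] at hv
    obtain ⟨⟨hvx, hvy, hv1⟩, hvy', hvz, hv2⟩ := hv
    obtain ⟨w, hw, hws, hwt⟩ := pick x z y v c3
    rw [mem_Nbhd] at hw
    obtain ⟨hwx, hwz, hw3⟩ := hw
    -- a := x, b := y, c := z, v := v, w := w
    exact hF (contains_F5_of hxy.symm hyz hvy.symm hws.symm hxz hvx.symm hwx.symm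
      hvz.symm hwz.symm hwt.symm hv1
      (by have : ({z, y, v} : Finset (Fin n)) = {y, z, v} := by ext t; simp; tauto
          rw [this]; exact hv2)
      hw3)
  · -- v ∈ N(x,y) ∩ N(x,z): shared x, apexes y, z; need w ∈ N(y,z) \ {x, v}
    rw [Finset.mem_inter, mem_Nbhd, mem_Nbhd] at hv
    obtain ⟨⟨hvx, hvy, hv1⟩, hvx', hvz, hv2⟩ := hv
    obtain ⟨w, hw, hws, hwt⟩ := pick y z x v c2
    rw [mem_Nbhd] at hw
    obtain ⟨hwy, hwz, hw3⟩ := hw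
    -- a := y, b := x, c := z, v := v, w := w
    exact hF (contains_F5_of hxy hxz hvx.symm hws.symm hyz hvy.symm hwy.symm
      hvz.symm hwz.symm hwt.symm
      (by have : ({y, x, v} : Finset (Fin n)) = {x, y, v} := by ext t; simp; tauto
          rw [this]; exact hv1)
      (by have : ({z, x, v} : Finset (Fin n)) = {x, z, v} := by ext t; simp; tauto
          rw [this]; exact hv2)
      hw3)
  · -- v ∈ N(y,z) ∩ N(x,z): shared z, apexes y, x; need w ∈ N(x,y) \ {z, v}
    rw [Finset.mem_inter, mem_Nbhd, mem_Nbhd] at hv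
    obtain ⟨⟨hvy, hvz, hv1⟩, hvx, hvz', hv2⟩ := hv
    obtain ⟨w, hw, hws, hwt⟩ := pick x y z v c1
    rw [mem_Nbhd] at hw
    obtain ⟨hwx, hwy, hw3⟩ := hw
    -- a := y, b := z, c := x, v := v, w := w
    exact hF (contains_F5_of hyz.symm hxz.symm hvz.symm hws.symm (Ne.symm hxy) hvy.symm hwy.symm
      hvx.symm hwx.symm hwt.symm
      (by have : ({y, z, v} : Finset (Fin n)) = {y, z, v} := rfl
          exact hv1)
      (by have : ({x, z, v} : Finset (Fin n)) = {x, z, v} := rfl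
          exact hv2)
      (by have : ({y, x, w} : Finset (Fin n)) = {x, y, w} := by ext t; simp; tauto
          rw [this]; exact hw3))

/-- vertex coloring mod 3 -/
def tcol (n : ℕ) (v : Fin n) : Fin 3 := ⟨v.val % 3, Nat.mod_lt _ (by omega)⟩

/-- The complete tripartite 3-graph with classes the residues mod 3. -/
def E0 (n : ℕ) : Finset (Finset (Fin n)) :=
  (Finset.univ.powersetCard 3).filter (fun e => (e.image (tcol n)).card = 3)

lemma mem_E0 {e : Finset (Fin n)} :
    e ∈ E0 n ↔ e.card = 3 ∧ (e.image (tcol n)).card = 3 := by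
  simp [E0, Finset.mem_powersetCard, Finset.subset_univ]

lemma E0_card (e : Finset (Fin n)) (he : e ∈ E0 n) : e.card = 3 := (mem_E0.mp he).1

lemma E0_inj {e : Finset (Fin n)} (he : e ∈ E0 n) {a b : Fin n}
    (ha : a ∈ e) (hb : b ∈ e) (hab : a ≠ b) : tcol n a ≠ tcol n b := by
  rw [mem_E0] at he
  have hinj : Set.InjOn (tcol n) e := by
    rw [← Finset.card_image_iff]
    rw [he.2, he.1]
  intro h
  exact hab (hinj ha hb h)

lemma E0_nonempty (hn : 6 ≤ n) : (E0 n).Nonempty := by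
  refine ⟨{⟨0, by omega⟩, ⟨1, by omega⟩, ⟨2, by omega⟩}, ?_⟩
  rw [mem_E0]
  constructor
  · rw [card_insert_of_notMem (by simp [Fin.ext_iff]),
      card_insert_of_notMem (by simp [Fin.ext_iff]), card_singleton]
  · have himg : ({⟨0, by omega⟩, ⟨1, by omega⟩, ⟨2, by omega⟩} : Finset (Fin n)).image (tcol n)
        = {⟨0, by omega⟩, ⟨1, by omega⟩, ⟨2, by omega⟩} := by
      simp [Finset.image_insert, tcol]
    rw [himg]
    rw [card_insert_of_notMem (by simp [Fin.ext_iff]),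
      card_insert_of_notMem (by simp [Fin.ext_iff]), card_singleton]

lemma E0_F5_free : ¬ Contains F5 (E0 n) := by
  rintro ⟨f, hfinj, hf⟩
  have h012 : ({0,1,2} : Finset (Fin 5)).image f ∈ E0 n := hf _ (by decide)
  have h013 : ({0,1,3} : Finset (Fin 5)).image f ∈ E0 n := hf _ (by decide)
  have h234 : ({2,3,4} : Finset (Fin 5)).image f ∈ E0 n := hf _ (by decide)
  have m0 : ∀ i : Fin 5, i ∈ ({0,1,2} : Finset (Fin 5)) →
      f i ∈ ({0,1,2} : Finset (Fin 5)).image f := fun i hi => Finset.mem_image_of_mem f hi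
  have g01 : tcol n (f 0) ≠ tcol n (f 1) :=
    E0_inj h012 (Finset.mem_image_of_mem f (by decide)) (Finset.mem_image_of_mem f (by decide))
      (fun h => by simpa using hfinj h)
  have g02 : tcol n (f 0) ≠ tcol n (f 2) :=
    E0_inj h012 (Finset.mem_image_of_mem f (by decide)) (Finset.mem_image_of_mem f (by decide))
      (fun h => by simpa using hfinj h)
  have g12 : tcol n (f 1) ≠ tcol n (f 2) :=
    E0_inj h012 (Finset.mem_image_of_mem f (by decide)) (Finset.mem_image_of_mem f (by decide))
      (fun h => by simpa using hfinj h)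
  have g03 : tcol n (f 0) ≠ tcol n (f 3) :=
    E0_inj h013 (Finset.mem_image_of_mem f (by decide)) (Finset.mem_image_of_mem f (by decide))
      (fun h => by simpa using hfinj h)
  have g13 : tcol n (f 1) ≠ tcol n (f 3) :=
    E0_inj h013 (Finset.mem_image_of_mem f (by decide)) (Finset.mem_image_of_mem f (by decide))
      (fun h => by simpa using hfinj h)
  have g23 : tcol n (f 2) ≠ tcol n (f 3) :=
    E0_inj h234 (Finset.mem_image_of_mem f (by decide)) (Finset.mem_image_of_mem f (by decide))
      (fun h => by simpa using hfinj h)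
  have v0 := (tcol n (f 0)).isLt
  have v1 := (tcol n (f 1)).isLt
  have v2 := (tcol n (f 2)).isLt
  have v3 := (tcol n (f 3)).isLt
  rw [Fin.ne_iff_vne] at g01 g02 g12 g03 g13 g23
  omega

lemma E0_minPosCoDeg (hn : 6 ≤ n) : n / 3 ≤ minPosCoDeg 3 n (E0 n) := by
  have hset : {d : ℕ | ∃ S : Finset (Fin n), S.card = 3 - 1 ∧ coDeg (E0 n) S = d ∧ 0 < d}.Nonempty := by
    obtain ⟨e, he⟩ := E0_nonempty hn
    obtain ⟨x, y, z, hxy, hxz, hyz, rfl⟩ := Finset.card_eq_three.mp (E0_card e he)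
    refine ⟨coDeg (E0 n) {x, y}, {x, y}, ?_, rfl, ?_⟩
    · rw [card_insert_of_notMem (by simp [hxy]), card_singleton]
    · rw [coDeg_pair (E0 n) E0_card hxy]
      apply Finset.card_pos.mpr
      exact ⟨z, mem_Nbhd.mpr ⟨hxz.symm, hyz.symm, he⟩⟩
  have hmem := Nat.sInf_mem hset
  obtain ⟨S, hS2, hSd, hSpos⟩ := hmem
  -- S = {a, b} with a ≠ b
  obtain ⟨a, b, hab, rfl⟩ := Finset.card_eq_two.mp hS2
  unfold minPosCoDeg
  rw [← hSd]
  rw [coDeg_pair (E0 n) E0_card hab]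
  -- since coDeg > 0, there is an edge containing a and b, so tcol a ≠ tcol b
  have hpos : (Nbhd (E0 n) a b).Nonempty := by
    apply Finset.card_pos.mp
    rw [← coDeg_pair (E0 n) E0_card hab, hSd]
    exact hSpos
  obtain ⟨u, hu⟩ := hpos
  rw [mem_Nbhd] at hu
  have hgab : tcol n a ≠ tcol n b :=
    E0_inj hu.2.2 (by simp) (by simp) hab
  -- the third residue class
  set k : ℕ := 3 - (tcol n a).val - (tcol n b).val with hk
  have hka : k ≠ (tcol n a).val := by
    have := (tcol n a).isLt; have := (tcol n b).isLt
    rw [Fin.ne_iff_vne] at hgab; omega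
  have hkb : k ≠ (tcol n b).val := by
    have := (tcol n a).isLt; have := (tcol n b).isLt
    rw [Fin.ne_iff_vne] at hgab; omega
  have hk3 : k < 3 := by
    have := (tcol n a).isLt; have := (tcol n b).isLt
    rw [Fin.ne_iff_vne] at hgab; omega
  -- vertices in class k sit inside Nbhd
  have hsub : (univ.filter (fun v : Fin n => (tcol n v).val = k)) ⊆ Nbhd (E0 n) a b := by
    intro v hv
    rw [Finset.mem_filter] at hv
    have hva : v ≠ a := by intro h; rw [h] at hv; exact hka hv.2.symm
    have hvb : v ≠ b := by intro h; rw [h] at hv; exact hkb hv.2.symm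
    rw [mem_Nbhd]
    refine ⟨hva, hvb, ?_⟩
    rw [mem_E0]
    constructor
    · rw [card_insert_of_notMem (by simp [hab, hva.symm]),
        card_insert_of_notMem (by simp [hvb.symm]), card_singleton]
    · have himg : ({a, b, v} : Finset (Fin n)).image (tcol n)
          = {tcol n a, tcol n b, tcol n v} := by
        simp [Finset.image_insert]
      rw [himg]
      have h1 : tcol n a ≠ tcol n v := fun h => hka (by rw [h, hv.2])
      have h2 : tcol n b ≠ tcol n v := fun h => hkb (by rw [h, hv.2])
      rw [card_insert_of_notMem (by simp [hgab, h1]),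
        card_insert_of_notMem (by simp [h2]), card_singleton]
  -- class k has at least n/3 elements
  have hclass : n / 3 ≤ (univ.filter (fun v : Fin n => (tcol n v).val = k)).card := by
    have : (univ : Finset (Fin (n / 3))).card ≤
        (univ.filter (fun v : Fin n => (tcol n v).val = k)).card := by
      apply Finset.card_le_card_of_injOn (fun j => ⟨3 * j.val + k, by omega⟩)
      · intro j _
        rw [Finset.mem_coe, Finset.mem_filter]
        refine ⟨Finset.mem_univ _, ?_⟩
        simp only [tcol]
        omega
      · intro j _ j' _ h
        rw [Fin.ext_iff] at h ⊢
        simp only at h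
        omega
    simpa using this
  calc n / 3 ≤ (univ.filter (fun v : Fin n => (tcol n v).val = k)).card := hclass
    _ ≤ (Nbhd (E0 n) a b).card := Finset.card_le_card hsub

end F5Aux

/-- For every integer `n ≥ 6`, `co⁺ex(n, F₅) = ⌊n/3⌋`. -/
theorem coPlusEx_F5 (n : ℕ) (hn : 6 ≤ n) :
    coPlusEx 3 n F5 = n / 3 := by
  have hub : ∀ d ∈ {d : ℕ | ∃ E : Finset (Finset (Fin n)),
      (∀ e ∈ E, e.card = 3) ∧ E.Nonempty ∧ ¬ Contains F5 E ∧ minPosCoDeg 3 n E = d},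
      d ≤ n / 3 := by
    rintro d ⟨E, h3, hne, hF, rfl⟩
    exact upper_bound hn E h3 hne hF
  have hE0mem : minPosCoDeg 3 n (E0 n) ∈ {d : ℕ | ∃ E : Finset (Finset (Fin n)),
      (∀ e ∈ E, e.card = 3) ∧ E.Nonempty ∧ ¬ Contains F5 E ∧ minPosCoDeg 3 n E = d} :=
    ⟨E0 n, E0_card, E0_nonempty hn, E0_F5_free, rfl⟩
  have heq : minPosCoDeg 3 n (E0 n) = n / 3 :=
    le_antisymm (hub _ hE0mem) (E0_minPosCoDeg hn)
  unfold coPlusEx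
  apply le_antisymm
  · exact csSup_le ⟨_, hE0mem⟩ hub
  · exact le_csSup ⟨n / 3, hub⟩ (heq ▸ hE0mem)
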